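/- For a finite simplicial complex Δ (including the empty face) with an acyclic matching having c critical elements, the sum over all i of dim H̃_i(Δ) is at most c. -/

import Mathlib

open Classical

variable {V : Type*}

/-- A finset of vertices is independent if no two of its members are adjacent. -/
def IsIndepSet (G : SimpleGraph V) (s : Finset V) : Prop :=
  ∀ u ∈ s, ∀ v ∈ s, ¬ G.Adj u v

/-- The set of faces of the independence complex of `G` (including the empty face). -/
def IndFaces (G : SimpleGraph V) : Set (Finset V) :=
  {s | IsIndepSet G s}

/-- `P` is a matching on the face poset `Δ`: a set of disjoint covering pairs. -/
def IsPosetMatching (Δ : Set (Finset V)) (P : Set (Finset V × Finset V)) : Prop :=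
  (∀ p ∈ P, p.1 ∈ Δ ∧ p.2 ∈ Δ ∧ p.1 ⊆ p.2 ∧ p.2.card = p.1.card + 1) ∧
  (∀ p ∈ P, ∀ q ∈ P, p ≠ q → p.1 ≠ q.1 ∧ p.1 ≠ q.2 ∧ p.2 ≠ q.1 ∧ p.2 ≠ q.2)

/-- A cycle in a matching: distinct matched pairs `{σ₁⊂τ₁},…,{σₙ⊂τₙ}`, `n > 1`,
with `σ_{i+1} ⊂ τ_i` for `i < n` and `σ₁ ⊂ τₙ`. -/
def MatchingHasCycle (P : Set (Finset V × Finset V)) : Prop :=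
  ∃ n : ℕ, 2 ≤ n ∧ ∃ f : ℕ → Finset V × Finset V,
    (∀ i < n, f i ∈ P) ∧ Set.InjOn f (Set.Iio n) ∧
    (∀ i, i + 1 < n → (f (i + 1)).1 ⊂ (f i).2) ∧ (f 0).1 ⊂ (f (n - 1)).2

/-- An acyclic (Morse) matching on the face poset `Δ`. -/
def IsAcyclicMatching (Δ : Set (Finset V)) (P : Set (Finset V × Finset V)) : Prop :=
  IsPosetMatching Δ P ∧ ¬ MatchingHasCycle P

/-- The critical (unmatched) faces of `Δ` with respect to `P`. -/
def criticalSet (Δ : Set (Finset V)) (P : Set (Finset V × Finset V)) : Set (Finset V) :=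
  {s ∈ Δ | ∀ p ∈ P, s ≠ p.1 ∧ s ≠ p.2}

/-- `cInvariant G` is the minimal number of critical cells in an acyclic matching on the
face poset of the independence complex of `G`. -/
noncomputable def cInvariant (G : SimpleGraph V) : ℕ :=
  sInf {n | ∃ P, IsAcyclicMatching (IndFaces G) P ∧ (criticalSet (IndFaces G) P).ncard = n}

open scoped Classical in
/-- The faces of `Δ` of cardinality `k`. -/
noncomputable def faceSet [Fintype V] (Δ : Set (Finset V)) (k : ℕ) : Finset (Finset V) :=
  Finset.univ.filter (fun s => s ∈ Δ ∧ s.card = k)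

open scoped Classical in
/-- The simplicial boundary matrix from faces of cardinality `k+1` to faces of
cardinality `k`, with the standard signs coming from the linear order on the vertices. -/
noncomputable def bdryMatrix [Fintype V] [LinearOrder V] (Δ : Set (Finset V)) (k : ℕ) :
    Matrix ↥(faceSet Δ k) ↥(faceSet Δ (k + 1)) ℚ :=
  fun t s => if t.1 ⊆ s.1 then
      (-1 : ℚ) ^ ((s.1 \ t.1).sum fun v => ((s.1.filter (· < v)).card)) else 0

/-- The total (reduced) Betti number of the simplicial complex `Δ` over `ℚ`:
the level-`k` summand is `dim C̃_{k-1} - rank ∂_k - rank ∂_{k-1}` where `C̃_{k-1}` is spanned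
by the faces of cardinality `k` (including the empty face at `k = 0`). -/
noncomputable def tBetti [Fintype V] [LinearOrder V] (Δ : Set (Finset V)) : ℕ :=
  ∑ k ∈ Finset.range (Fintype.card V + 2),
    ((faceSet Δ k).card - (bdryMatrix Δ k).rank -
      (if k = 0 then 0 else (bdryMatrix Δ (k - 1)).rank))

section MorseAux

open scoped Classical

variable {V : Type*}

/-- The matched pairs whose bottom face has cardinality `k`, as a finset. -/
noncomputable def levelP [Fintype V] (P : Set (Finset V × Finset V)) (k : ℕ) :
    Finset (Finset V × Finset V) :=
  (Set.toFinite P).toFinset.filter (fun p => p.1.card = k)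

/-- The matched pairs whose top face has cardinality `k`, as a finset. -/
noncomputable def levelPtop [Fintype V] (P : Set (Finset V × Finset V)) (k : ℕ) :
    Finset (Finset V × Finset V) :=
  (Set.toFinite P).toFinset.filter (fun p => p.2.card = k)

/-- The critical faces of cardinality `k`, as a finset. -/
noncomputable def critF [Fintype V] (Δ : Set (Finset V)) (P : Set (Finset V × Finset V))
    (k : ℕ) : Finset (Finset V) :=
  (faceSet Δ k).filter (fun s => ∀ p ∈ P, s ≠ p.1 ∧ s ≠ p.2)

lemma exists_sink {Δ : Set (Finset V)} {P : Set (Finset V × Finset V)}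
    (hpm : IsPosetMatching Δ P) (hcyc : ¬ MatchingHasCycle P) (k : ℕ)
    (T : Finset (Finset V × Finset V)) (hTP : ∀ p ∈ T, p ∈ P)
    (hTk : ∀ p ∈ T, p.1.card = k) (hne : T.Nonempty) :
    ∃ p ∈ T, ∀ q ∈ T, q ≠ p → ¬ p.1 ⊆ q.2 := by
  by_contra hcon
  push_neg at hcon
  have hstep : ∀ x : {p // p ∈ T}, ∃ y : {p // p ∈ T}, y.1 ≠ x.1 ∧ x.1.1 ⊆ y.1.2 := by
    rintro ⟨p, hp⟩
    obtain ⟨q, hq, hqp, hsub⟩ := hcon p hp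
    exact ⟨⟨q, hq⟩, hqp, hsub⟩
  choose g hg1 hg2 using hstep
  obtain ⟨x0, hx0⟩ := hne
  set a : ℕ → {p // p ∈ T} := fun n => g^[n] ⟨x0, hx0⟩ with ha
  have hsucc : ∀ n, a (n + 1) = g (a n) := fun n => Function.iterate_succ_apply' g n _
  have hQ : ∃ j, ∃ i, i < j ∧ a i = a j := by
    obtain ⟨i0, j0, hne', heq'⟩ := Finite.exists_ne_map_eq_of_infinite a
    rcases Nat.lt_or_ge i0 j0 with h | h
    · exact ⟨j0, i0, h, heq'⟩
    · exact ⟨i0, j0, lt_of_le_of_ne h (fun e => hne' e.symm), heq'.symm⟩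
  classical
  set J := Nat.find hQ with hJ
  obtain ⟨I, hIJ, hIJeq⟩ := Nat.find_spec hQ
  have hinj : ∀ x, x < J → ∀ y, y < J → a x = a y → x = y := by
    intro x hx y hy hxy
    by_contra hxyne
    rcases Nat.lt_or_ge x y with h | h
    · exact Nat.find_min hQ hy ⟨x, h, hxy⟩
    · exact Nat.find_min hQ hx ⟨y, lt_of_le_of_ne h (fun e => hxyne e.symm), hxy.symm⟩
  have hne2 : ∀ s, a s ≠ a (s + 1) := by
    intro s h
    apply hg1 (a s)
    rw [← hsucc]; rw [← h]
  have hJI2 : I + 2 ≤ J := by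
    rcases Nat.lt_or_ge (I + 1) J with h | h
    · omega
    · have : J = I + 1 := by omega
      exact absurd (this ▸ hIJeq) (hne2 I)
  -- the chain gives a cycle
  have hsub' : ∀ s, (a s).1.1 ⊂ (a (s + 1)).1.2 := by
    intro s
    have h1 : (a s).1.1 ⊆ (a (s + 1)).1.2 := by rw [hsucc]; exact hg2 (a s)
    refine h1.ssubset_of_ne (fun h => ?_)
    have c1 : (a s).1.1.card = k := hTk _ (a s).2
    have c2 : (a (s + 1)).1.2.card = k + 1 := by
      rw [(hpm.1 _ (hTP _ (a (s + 1)).2)).2.2.2, hTk _ (a (s + 1)).2]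
    rw [h, c2] at c1; omega
  apply hcyc
  refine ⟨J - I, by omega, fun t => (a (J - 1 - t)).1, fun i _ => hTP _ (a _).2, ?_, ?_, ?_⟩
  · intro x hx y hy hxy
    simp only [Set.mem_Iio] at hx hy
    have := hinj (J - 1 - x) (by omega) (J - 1 - y) (by omega) (Subtype.ext hxy)
    omega
  · intro i hi
    show (a (J - 1 - (i + 1))).1.1 ⊂ (a (J - 1 - i)).1.2
    have h1 : J - 1 - i = (J - 1 - (i + 1)) + 1 := by omega
    rw [h1]
    exact hsub' (J - 1 - (i + 1))
  · show (a (J - 1 - 0)).1.1 ⊂ (a (J - 1 - (J - I - 1))).1.2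
    have h0 : J - 1 - 0 = J - 1 := by omega
    have h1 : J - 1 - (J - I - 1) = I := by omega
    rw [h0, h1]
    have := hsub' (J - 1)
    have h2 : J - 1 + 1 = J := by omega
    rw [h2] at this
    rwa [← hIJeq] at this

lemma levelP_card_le_rank [Fintype V] [LinearOrder V] {Δ : Set (Finset V)}
    {P : Set (Finset V × Finset V)}
    (hpm : IsPosetMatching Δ P) (hcyc : ¬ MatchingHasCycle P) (k : ℕ) :
    (levelP P k).card ≤ (bdryMatrix Δ k).rank := by
  classical
  set S := levelP P k with hS
  have hSP : ∀ p ∈ S, p ∈ P := by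
    intro p hp
    simp only [hS, levelP, Finset.mem_filter, Set.Finite.mem_toFinset] at hp
    exact hp.1
  have hSk : ∀ p ∈ S, p.1.card = k := by
    intro p hp
    simp only [hS, levelP, Finset.mem_filter] at hp
    exact hp.2
  have hσ : ∀ p ∈ S, p.1 ∈ faceSet Δ k := by
    intro p hp
    simp only [faceSet, Finset.mem_filter, Finset.mem_univ, true_and]
    exact ⟨(hpm.1 p (hSP p hp)).1, hSk p hp⟩
  have hτ : ∀ p ∈ S, p.2 ∈ faceSet Δ (k + 1) := by
    intro p hp
    simp only [faceSet, Finset.mem_filter, Finset.mem_univ, true_and]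
    refine ⟨(hpm.1 p (hSP p hp)).2.1, ?_⟩
    rw [(hpm.1 p (hSP p hp)).2.2.2, hSk p hp]
  -- the matched columns
  set v : {p // p ∈ S} → (↥(faceSet Δ k) → ℚ) :=
    fun p t => bdryMatrix Δ k t ⟨p.1.2, hτ p.1 p.2⟩ with hv
  have hli : LinearIndependent ℚ v := by
    rw [Fintype.linearIndependent_iff]
    intro c hc
    by_contra hcon
    push_neg at hcon
    obtain ⟨p1, hp1⟩ := hcon
    set T : Finset (Finset V × Finset V) :=
      (S.attach.filter (fun p => c p ≠ 0)).image Subtype.val with hT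
    have hmemT : ∀ q : {p // p ∈ S}, q.1 ∈ T ↔ c q ≠ 0 := by
      intro q
      simp only [hT, Finset.mem_image, Finset.mem_filter, Finset.mem_attach, true_and]
      constructor
      · rintro ⟨r, hr, hrq⟩
        have : r = q := Subtype.ext hrq
        rwa [← this]
      · intro h; exact ⟨q, h, rfl⟩
    obtain ⟨p0, hp0T, hp0max⟩ := exists_sink hpm hcyc k T
      (by intro p hp
          simp only [hT, Finset.mem_image, Finset.mem_filter] at hp
          obtain ⟨r, _, hrq⟩ := hp
          exact hSP _ (hrq ▸ r.2))
      (by intro p hp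
          simp only [hT, Finset.mem_image, Finset.mem_filter] at hp
          obtain ⟨r, _, hrq⟩ := hp
          exact hSk _ (hrq ▸ r.2))
      ⟨p1.1, (hmemT p1).2 hp1⟩
    have hp0S : p0 ∈ S := by
      simp only [hT, Finset.mem_image, Finset.mem_filter] at hp0T
      obtain ⟨r, _, hrq⟩ := hp0T
      exact hrq ▸ r.2
    set q0 : {p // p ∈ S} := ⟨p0, hp0S⟩ with hq0
    have hcq0 : c q0 ≠ 0 := (hmemT q0).1 hp0T
    have heval := congrFun hc ⟨p0.1, hσ p0 hp0S⟩
    simp only [Finset.sum_apply, Pi.smul_apply, Pi.zero_apply, smul_eq_mul] at heval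
    rw [Finset.sum_eq_single q0] at heval
    · have hd : v q0 ⟨p0.1, hσ p0 hp0S⟩ ≠ 0 := by
        simp only [hv, bdryMatrix]
        rw [if_pos (hpm.1 p0 (hSP p0 hp0S)).2.2.1]
        exact pow_ne_zero _ (by norm_num)
      rcases mul_eq_zero.1 heval with h | h
      · exact hcq0 h
      · exact hd h
    · intro q _ hq
      rcases eq_or_ne (c q) 0 with h | h
      · rw [h, zero_mul]
      · have hqT : q.1 ∈ T := (hmemT q).2 h
        have hqne : q.1 ≠ p0 := fun e => hq (Subtype.ext e)
        have := hp0max q.1 hqT hqne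
        have hz : v q ⟨p0.1, hσ p0 hp0S⟩ = 0 := by
          simp only [hv, bdryMatrix]
          rw [if_neg this]
        rw [hz, mul_zero]
    · intro h
      exact absurd (Finset.mem_univ q0) h
  -- columns lie in the range of mulVecLin
  have hvmem : ∀ p : {p // p ∈ S},
      v p ∈ LinearMap.range (bdryMatrix Δ k).mulVecLin := by
    intro p
    refine ⟨Pi.single ⟨p.1.2, hτ p.1 p.2⟩ 1, ?_⟩
    rw [Matrix.mulVecLin_apply, Matrix.mulVec_single]
    ext t
    rw [MulOpposite.op_one, one_smul]; rfl
  have hli' : LinearIndependent ℚ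
      (fun p : {p // p ∈ S} =>
        (⟨v p, hvmem p⟩ : ↥(LinearMap.range (bdryMatrix Δ k).mulVecLin))) := by
    apply LinearIndependent.of_comp (LinearMap.range (bdryMatrix Δ k).mulVecLin).subtype
    exact hli
  have := hli'.fintype_card_le_finrank
  rwa [Fintype.card_coe] at this

lemma faceSet_card_le [Fintype V] [LinearOrder V] {Δ : Set (Finset V)}
    {P : Set (Finset V × Finset V)} (hpm : IsPosetMatching Δ P) (k : ℕ) :
    (faceSet Δ k).card ≤
      (critF Δ P k).card + (levelP P k).card + (levelPtop P k).card := by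
  classical
  have hsub : faceSet Δ k ⊆
      critF Δ P k ∪ (levelP P k).image Prod.fst ∪ (levelPtop P k).image Prod.snd := by
    intro s hs
    have hcard : s.card = k := by
      simp only [faceSet, Finset.mem_filter] at hs; exact hs.2.2
    by_cases hcrit : ∀ p ∈ P, s ≠ p.1 ∧ s ≠ p.2
    · refine Finset.mem_union_left _ (Finset.mem_union_left _ ?_)
      simp only [critF, Finset.mem_filter]
      exact ⟨hs, hcrit⟩
    · push_neg at hcrit
      obtain ⟨p, hp, hps⟩ := hcrit
      by_cases h1 : s = p.1
      · refine Finset.mem_union_left _ (Finset.mem_union_right _ ?_)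
        refine Finset.mem_image.2 ⟨p, ?_, h1.symm⟩
        simp only [levelP, Finset.mem_filter, Set.Finite.mem_toFinset]
        exact ⟨hp, h1 ▸ hcard⟩
      · have h2 : s = p.2 := hps h1
        refine Finset.mem_union_right _ ?_
        refine Finset.mem_image.2 ⟨p, ?_, h2.symm⟩
        simp only [levelPtop, Finset.mem_filter, Set.Finite.mem_toFinset]
        exact ⟨hp, h2 ▸ hcard⟩
  calc (faceSet Δ k).card
      ≤ (critF Δ P k ∪ (levelP P k).image Prod.fst ∪
          (levelPtop P k).image Prod.snd).card := Finset.card_le_card hsub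
    _ ≤ (critF Δ P k ∪ (levelP P k).image Prod.fst).card
          + ((levelPtop P k).image Prod.snd).card := Finset.card_union_le _ _
    _ ≤ (critF Δ P k).card + ((levelP P k).image Prod.fst).card
          + ((levelPtop P k).image Prod.snd).card := by
        exact Nat.add_le_add_right (Finset.card_union_le _ _) _
    _ ≤ (critF Δ P k).card + (levelP P k).card + (levelPtop P k).card := by
        have h1 := Finset.card_image_le (s := levelP P k) (f := Prod.fst)
        have h2 := Finset.card_image_le (s := levelPtop P k) (f := Prod.snd)
        omega

lemma levelPtop_zero [Fintype V] {P : Set (Finset V × Finset V)} {Δ : Set (Finset V)}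
    (hpm : IsPosetMatching Δ P) : levelPtop P 0 = ∅ := by
  classical
  ext p
  simp only [levelPtop, Finset.mem_filter, Set.Finite.mem_toFinset, Finset.notMem_empty,
    iff_false, not_and]
  intro hp
  have := (hpm.1 p hp).2.2.2
  omega

lemma levelPtop_succ [Fintype V] {P : Set (Finset V × Finset V)} {Δ : Set (Finset V)}
    (hpm : IsPosetMatching Δ P) (k : ℕ) : levelPtop P (k + 1) = levelP P k := by
  classical
  ext p
  simp only [levelPtop, levelP, Finset.mem_filter, Set.Finite.mem_toFinset]
  constructor
  · rintro ⟨hp, h⟩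
    have := (hpm.1 p hp).2.2.2
    exact ⟨hp, by omega⟩
  · rintro ⟨hp, h⟩
    have := (hpm.1 p hp).2.2.2
    exact ⟨hp, by omega⟩

end MorseAux

/-- Discrete Morse inequality: for a finite simplicial complex `Δ` (including the empty
face) with an acyclic matching having `c` critical cells, the total reduced Betti number
of `Δ` is at most `c`. -/
theorem statement_17 {V : Type*} [Fintype V] [LinearOrder V] (Δ : Set (Finset V))
    (hcomplex : ∀ s ∈ Δ, ∀ t ⊆ s, t ∈ Δ) (hempty : ∅ ∈ Δ)
    (P : Set (Finset V × Finset V)) (c : ℕ)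
    (hP : IsAcyclicMatching Δ P) (hc : (criticalSet Δ P).ncard = c) :
    tBetti Δ ≤ c := by
  classical
  obtain ⟨hpm, hcyc⟩ := hP
  have hterm : ∀ k ∈ Finset.range (Fintype.card V + 2),
      (faceSet Δ k).card - (bdryMatrix Δ k).rank -
        (if k = 0 then 0 else (bdryMatrix Δ (k - 1)).rank) ≤ (critF Δ P k).card := by
    intro k _
    have hF := faceSet_card_le hpm k
    have hr := levelP_card_le_rank (Δ := Δ) hpm hcyc k
    cases k with
    | zero =>
      rw [if_pos rfl]
      rw [levelPtop_zero hpm, Finset.card_empty] at hF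
      omega
    | succ j =>
      rw [if_neg (Nat.succ_ne_zero j)]
      rw [levelPtop_succ hpm] at hF
      have hr' := levelP_card_le_rank (Δ := Δ) hpm hcyc j
      have he : j + 1 - 1 = j := rfl
      rw [he]
      omega
  have hsum : tBetti Δ ≤ ∑ k ∈ Finset.range (Fintype.card V + 2), (critF Δ P k).card := by
    rw [tBetti]
    exact Finset.sum_le_sum hterm
  refine hsum.trans ?_
  have hdisj : ∀ x ∈ Finset.range (Fintype.card V + 2),
      ∀ y ∈ Finset.range (Fintype.card V + 2), x ≠ y →
        Disjoint (critF Δ P x) (critF Δ P y) := by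
    intro x _ y _ hxy
    rw [Finset.disjoint_left]
    intro s hsx hsy
    simp only [critF, faceSet, Finset.mem_filter, Finset.mem_univ, true_and] at hsx hsy
    exact hxy (hsx.1.2 ▸ hsy.1.2 ▸ rfl)
  rw [← Finset.card_biUnion hdisj]
  have hfin : (criticalSet Δ P).Finite := Set.toFinite _
  have hsubset : (Finset.range (Fintype.card V + 2)).biUnion (critF Δ P) ⊆ hfin.toFinset := by
    intro s hs
    simp only [Finset.mem_biUnion] at hs
    obtain ⟨k, _, hk⟩ := hs
    simp only [critF, faceSet, Finset.mem_filter, Finset.mem_univ, true_and] at hk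
    rw [Set.Finite.mem_toFinset]
    exact ⟨hk.1.1, hk.2⟩
  calc ((Finset.range (Fintype.card V + 2)).biUnion (critF Δ P)).card
      ≤ hfin.toFinset.card := Finset.card_le_card hsubset
    _ = c := by rw [← Set.ncard_eq_toFinset_card _ hfin, hc]
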